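/- arXiv:1311.0495 — 2 statements merged into one kernel-verified Lean document; each statement's English description precedes it below -/
import Mathlib

section
/- Let u : ℝ² → ℝ be a C⁴ function of (x,t) and let z ∈ ℂ with z ≠ 0. Then at every point (x,t) the zero-curvature equation ∂ₜA(x,t,z) − ∂ₓB(x,t,z) + A(x,t,z)·B(x,t,z) − B(x,t,z)·A(x,t,z) = 0 holds if and only if u_{txx}(x,t) − 3u_x(x,t) + 3u_x(x,t)u_{xx}(x,t) + u(x,t)u_{xxx}(x,t) = 0. In other words, the first-order 3×3 matrix Lax pair Φ_x = AΦ, Φ_t = BΦ is compatible precisely when u solves the Ostrovsky–Vakhnenko (short-wave Degasperis–Procesi) equation with κ = 1. -/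
open Matrix

noncomputable section

/-- Partial derivative of `u` in the first (space) variable. -/
def ux (u : ℝ → ℝ → ℝ) (x t : ℝ) : ℝ := deriv (fun x' => u x' t) x

/-- Second partial derivative of `u` in the space variable. -/
def uxx (u : ℝ → ℝ → ℝ) (x t : ℝ) : ℝ := deriv (fun x' => ux u x' t) x

/-- Third partial derivative of `u` in the space variable. -/
def uxxx (u : ℝ → ℝ → ℝ) (x t : ℝ) : ℝ := deriv (fun x' => uxx u x' t) x

/-- Mixed partial derivative `u_{txx} = ∂ₜ(u_{xx})`. -/
def utxx (u : ℝ → ℝ → ℝ) (x t : ℝ) : ℝ := deriv (fun t' => uxx u x t') t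

/-- The matrix `A(x,t,z)` of the first-order 3×3 Lax pair. -/
def Amat (u : ℝ → ℝ → ℝ) (z : ℂ) (x t : ℝ) : Matrix (Fin 3) (Fin 3) ℂ :=
  !![0, 1, 0;
     0, 0, 1;
     z ^ 3 * (1 - (uxx u x t : ℂ)), 0, 0]

/-- The matrix `B(x,t,z)` of the first-order 3×3 Lax pair. -/
def Bmat (u : ℝ → ℝ → ℝ) (z : ℂ) (x t : ℝ) : Matrix (Fin 3) (Fin 3) ℂ :=
  !![(ux u x t : ℂ), -(u x t : ℂ), z⁻¹ ^ 3;
     1, 0, -(u x t : ℂ);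
     -z ^ 3 * (u x t : ℂ) * (1 - (uxx u x t : ℂ)), 1, -(ux u x t : ℂ)]

/-- Entrywise partial derivative of a matrix-valued function in the time variable. -/
def Tderiv (M : ℝ → ℝ → Matrix (Fin 3) (Fin 3) ℂ) (x t : ℝ) : Matrix (Fin 3) (Fin 3) ℂ :=
  Matrix.of fun i j => deriv (fun t' => M x t' i j) t

/-- Entrywise partial derivative of a matrix-valued function in the space variable. -/
def Xderiv (M : ℝ → ℝ → Matrix (Fin 3) (Fin 3) ℂ) (x t : ℝ) : Matrix (Fin 3) (Fin 3) ℂ :=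
  Matrix.of fun i j => deriv (fun x' => M x' t i j) x

private lemma hasDerivAt_fst' {F : ℝ × ℝ → ℝ} (hF : Differentiable ℝ F) (x t : ℝ) :
    HasDerivAt (fun x' => F (x', t)) (fderiv ℝ F (x, t) (1, 0)) x := by
  have h1 : HasDerivAt (fun x' : ℝ => ((x' : ℝ), t)) ((1 : ℝ), (0 : ℝ)) x :=
    HasDerivAt.prodMk (hasDerivAt_id x) (hasDerivAt_const x t)
  exact ((hF (x, t)).hasFDerivAt).comp_hasDerivAt x h1

private lemma hasDerivAt_snd' {F : ℝ × ℝ → ℝ} (hF : Differentiable ℝ F) (x t : ℝ) :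
    HasDerivAt (fun t' => F (x, t')) (fderiv ℝ F (x, t) (0, 1)) t := by
  have h1 : HasDerivAt (fun t' : ℝ => (x, (t' : ℝ))) ((0 : ℝ), (1 : ℝ)) t :=
    HasDerivAt.prodMk (hasDerivAt_const t x) (hasDerivAt_id t)
  exact ((hF (x, t)).hasFDerivAt).comp_hasDerivAt t h1

/-- The zero-curvature equation `∂ₜA − ∂ₓB + AB − BA = 0` for the first-order 3×3
Lax pair holds at `(x,t)` if and only if `u` satisfies the Ostrovsky–Vakhnenko
(short-wave Degasperis–Procesi) equation with `κ = 1` at `(x,t)`. -/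
theorem zero_curvature_iff_OV (u : ℝ → ℝ → ℝ)
    (hu : ContDiff ℝ 4 (fun p : ℝ × ℝ => u p.1 p.2))
    (z : ℂ) (hz : z ≠ 0) :
    ∀ x t : ℝ,
      Tderiv (Amat u z) x t - Xderiv (Bmat u z) x t
        + Amat u z x t * Bmat u z x t - Bmat u z x t * Amat u z x t = 0
      ↔ utxx u x t - 3 * ux u x t + 3 * ux u x t * uxx u x t
          + u x t * uxxx u x t = 0 := by
  have hF1 : Differentiable ℝ (fun p : ℝ × ℝ => u p.1 p.2) := hu.differentiable (by norm_num)
  have hG : ContDiff ℝ 3 (fun p : ℝ × ℝ => fderiv ℝ (fun q : ℝ × ℝ => u q.1 q.2) p (1, 0)) :=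
    (hu.fderiv_right (by norm_num)).clm_apply contDiff_const
  have hG1 : Differentiable ℝ (fun p : ℝ × ℝ => fderiv ℝ (fun q : ℝ × ℝ => u q.1 q.2) p (1, 0)) :=
    hG.differentiable (by norm_num)
  have hH : ContDiff ℝ 2 (fun p : ℝ × ℝ =>
      fderiv ℝ (fun p' : ℝ × ℝ => fderiv ℝ (fun q : ℝ × ℝ => u q.1 q.2) p' (1, 0)) p (1, 0)) :=
    (hG.fderiv_right (by norm_num)).clm_apply contDiff_const
  have hH1 : Differentiable ℝ (fun p : ℝ × ℝ =>
      fderiv ℝ (fun p' : ℝ × ℝ => fderiv ℝ (fun q : ℝ × ℝ => u q.1 q.2) p' (1, 0)) p (1, 0)) :=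
    hH.differentiable (by norm_num)
  have hux : ∀ x t, ux u x t = fderiv ℝ (fun q : ℝ × ℝ => u q.1 q.2) (x, t) (1, 0) :=
    fun x t => (hasDerivAt_fst' hF1 x t).deriv
  have hdu : ∀ x t, HasDerivAt (fun x' => u x' t) (ux u x t) x := by
    intro x t
    rw [hux]
    exact hasDerivAt_fst' hF1 x t
  have he1 : ∀ t, (fun x' => ux u x' t)
      = fun x' => fderiv ℝ (fun q : ℝ × ℝ => u q.1 q.2) (x', t) (1, 0) :=
    fun t => funext fun x' => hux x' t
  have hdux : ∀ x t, HasDerivAt (fun x' => ux u x' t) (uxx u x t) x := by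
    intro x t
    have hval : uxx u x t
        = fderiv ℝ (fun p' : ℝ × ℝ => fderiv ℝ (fun q : ℝ × ℝ => u q.1 q.2) p' (1, 0)) (x, t) (1, 0) := by
      show deriv (fun x' => ux u x' t) x = _
      rw [he1 t]
      exact (hasDerivAt_fst' hG1 x t).deriv
    rw [hval, he1 t]
    exact hasDerivAt_fst' hG1 x t
  have huxx : ∀ x t, uxx u x t
      = fderiv ℝ (fun p' : ℝ × ℝ => fderiv ℝ (fun q : ℝ × ℝ => u q.1 q.2) p' (1, 0)) (x, t) (1, 0) := by
    intro x t
    show deriv (fun x' => ux u x' t) x = _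
    rw [he1 t]
    exact (hasDerivAt_fst' hG1 x t).deriv
  have he2 : ∀ t, (fun x' => uxx u x' t)
      = fun x' => fderiv ℝ (fun p' : ℝ × ℝ => fderiv ℝ (fun q : ℝ × ℝ => u q.1 q.2) p' (1, 0)) (x', t) (1, 0) :=
    fun t => funext fun x' => huxx x' t
  have he2t : ∀ x, (fun t' => uxx u x t')
      = fun t' => fderiv ℝ (fun p' : ℝ × ℝ => fderiv ℝ (fun q : ℝ × ℝ => u q.1 q.2) p' (1, 0)) (x, t') (1, 0) :=
    fun x => funext fun t' => huxx x t'
  have hduxx : ∀ x t, HasDerivAt (fun x' => uxx u x' t) (uxxx u x t) x := by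
    intro x t
    have hval : uxxx u x t = fderiv ℝ (fun p : ℝ × ℝ =>
        fderiv ℝ (fun p' : ℝ × ℝ => fderiv ℝ (fun q : ℝ × ℝ => u q.1 q.2) p' (1, 0)) p (1, 0)) (x, t) (1, 0) := by
      show deriv (fun x' => uxx u x' t) x = _
      rw [he2 t]
      exact (hasDerivAt_fst' hH1 x t).deriv
    rw [hval, he2 t]
    exact hasDerivAt_fst' hH1 x t
  have hdtuxx : ∀ x t, HasDerivAt (fun t' => uxx u x t') (utxx u x t) t := by
    intro x t
    have hval : utxx u x t = fderiv ℝ (fun p : ℝ × ℝ =>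
        fderiv ℝ (fun p' : ℝ × ℝ => fderiv ℝ (fun q : ℝ × ℝ => u q.1 q.2) p' (1, 0)) p (1, 0)) (x, t) (0, 1) := by
      show deriv (fun t' => uxx u x t') t = _
      rw [he2t x]
      exact (hasDerivAt_snd' hH1 x t).deriv
    rw [hval, he2t x]
    exact hasDerivAt_snd' hH1 x t
  intro x t
  have hp := (((hdu x t).ofReal_comp).const_mul (-z ^ 3)).mul
    (((hduxx x t).ofReal_comp).const_sub 1)
  have hA : Tderiv (Amat u z) x t
      = !![0, 0, 0; 0, 0, 0; z ^ 3 * (-(utxx u x t : ℂ)), 0, 0] := by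
    ext i j
    fin_cases i <;> fin_cases j <;>
      simp only [Tderiv, Amat, Matrix.of_apply, Matrix.cons_val', Matrix.cons_val_zero,
        Matrix.cons_val_one, Matrix.head_cons, Matrix.head_fin_const, Matrix.empty_val',
        Matrix.cons_val_fin_one, Matrix.cons_val_two, Matrix.tail_cons]
    all_goals
      first
        | exact deriv_const _ _
        | exact (((hdtuxx x t).ofReal_comp.const_sub 1).const_mul (z ^ 3)).deriv
  have hB : Xderiv (Bmat u z) x t
      = !![(uxx u x t : ℂ), -(ux u x t : ℂ), 0;
           0, 0, -(ux u x t : ℂ);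
           -z ^ 3 * (ux u x t : ℂ) * (1 - (uxx u x t : ℂ))
             + -z ^ 3 * (u x t : ℂ) * (-(uxxx u x t : ℂ)), 0, -(uxx u x t : ℂ)] := by
    ext i j
    fin_cases i <;> fin_cases j <;>
      simp only [Xderiv, Bmat, Matrix.of_apply, Matrix.cons_val', Matrix.cons_val_zero,
        Matrix.cons_val_one, Matrix.head_cons, Matrix.head_fin_const, Matrix.empty_val',
        Matrix.cons_val_fin_one, Matrix.cons_val_two, Matrix.tail_cons]
    all_goals
      first
        | exact deriv_const _ _
        | exact ((hdux x t).ofReal_comp).deriv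
        | exact (((hdu x t).ofReal_comp).neg).deriv
        | exact (((hdux x t).ofReal_comp).neg).deriv
        | exact hp.deriv
  have key : Tderiv (Amat u z) x t - Xderiv (Bmat u z) x t
        + Amat u z x t * Bmat u z x t - Bmat u z x t * Amat u z x t
      = !![0, 0, 0; 0, 0, 0;
           -(z ^ 3) * ((utxx u x t - 3 * ux u x t + 3 * ux u x t * uxx u x t
             + u x t * uxxx u x t : ℝ) : ℂ), 0, 0] := by
    rw [hA, hB]
    ext i j
    fin_cases i <;> fin_cases j
    all_goals
      simp only [Amat, Bmat, Matrix.sub_apply, Matrix.add_apply, Matrix.mul_apply,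
        Fin.sum_univ_three, Matrix.of_apply, Matrix.cons_val', Matrix.cons_val_zero,
        Matrix.cons_val_one, Matrix.head_cons, Matrix.head_fin_const, Matrix.empty_val',
        Matrix.cons_val_fin_one, Matrix.cons_val_two, Matrix.tail_cons]
    all_goals push_cast
    all_goals (try field_simp)
    all_goals (try ring)
    all_goals simp [Matrix.vecHead, Matrix.vecTail]
  rw [key]
  constructor
  · intro h
    have h20 := Matrix.ext_iff.mpr h 2 0
    simp at h20
    rcases h20 with h' | h'
    · exact absurd h' hz
    · have h'' : ((utxx u x t - 3 * ux u x t + 3 * ux u x t * uxx u x t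
          + u x t * uxxx u x t : ℝ) : ℂ) = 0 := by
        push_cast at h' ⊢
        exact h'
      exact_mod_cast h''
  · intro h
    rw [h]
    ext i j
    fin_cases i <;> fin_cases j <;> first | rfl | simp [Matrix.vecHead, Matrix.vecTail]

end
end

section
/- (Conjugation symmetry of the Lax pair coefficients, underlying Proposition 2.6 (S1).) Let Γ₁ be the 3×3 permutation matrix [[0,1,0],[1,0,0],[0,0,1]], let ω = e^{2πi/3}, and let q > 0, q_x, u be real numbers with z ∈ ℂ, z ≠ 0. Form U from the values q, q_x and V(z) from the values q, q_x, u (as in the first 3×3 Lax pair). Then Γ₁·conj(q·Λ(conj(z)) + U)·Γ₁ = q·Λ(z) + U and Γ₁·conj(−u q·Λ(conj(z)) + Λ(conj(z))^{−1} + V(conj(z)))·Γ₁ = −u q·Λ(z) + Λ(z)^{−1} + V(z), where conj applied to a matrix means entrywise complex conjugation. -/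
open Matrix

noncomputable section

/-- `ω = e^{2πi/3}`, a primitive cube root of unity. -/
def ω : ℂ := Complex.exp (2 * Real.pi * Complex.I / 3)

/-- `Λ(z) = z·diag(ω, ω², 1)`. -/
def Lam (z : ℂ) : Matrix (Fin 3) (Fin 3) ℂ :=
  z • Matrix.diagonal ![ω, ω ^ 2, 1]

/-- The matrix `U` built from the values `q` and `q_x`. -/
def Umat (q qx : ℝ) : Matrix (Fin 3) (Fin 3) ℂ :=
  ((qx / (3 * q) : ℝ) : ℂ) •
    !![0, 1 - ω ^ 2, 1 - ω;
       1 - ω, 0, 1 - ω ^ 2;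
       1 - ω ^ 2, 1 - ω, 0]

/-- The matrix `V(z)` built from the values `q`, `q_x` and `u`. -/
def Vmat (q qx u : ℝ) (z : ℂ) : Matrix (Fin 3) (Fin 3) ℂ :=
  (-(u : ℂ)) • Umat q qx +
    (1 / (3 * z)) •
      ((((3 * (1 / q - 1) : ℝ) : ℂ) • (1 : Matrix (Fin 3) (Fin 3) ℂ) +
          ((q ^ 2 - 1 / q : ℝ) : ℂ) • (!![1, 1, 1; 1, 1, 1; 1, 1, 1] : Matrix (Fin 3) (Fin 3) ℂ)) *
        Matrix.diagonal ![ω ^ 2, ω, 1])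

/-- The permutation matrix `Γ₁`. -/
def Gamma1 : Matrix (Fin 3) (Fin 3) ℂ :=
  !![0, 1, 0;
     1, 0, 0;
     0, 0, 1]

/-- Entrywise complex conjugation of a matrix. -/
def mconj (M : Matrix (Fin 3) (Fin 3) ℂ) : Matrix (Fin 3) (Fin 3) ℂ :=
  M.map (starRingEnd ℂ)

lemma hω3 : ω ^ 3 = 1 := by
  rw [ω, ← Complex.exp_nat_mul]
  norm_num
  rw [show (3:ℂ) * (2 * Real.pi * Complex.I / 3) = 2 * Real.pi * Complex.I by ring,
    Complex.exp_two_pi_mul_I]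

lemma hωne0 : ω ≠ 0 := by
  intro h; have := hω3; rw [h] at this; norm_num at this

lemma hstar : (starRingEnd ℂ) ω = ω ^ 2 := by
  have habs : (starRingEnd ℂ) ω * ω = 1 := by
    rw [Complex.conj_mul']
    have : ‖ω‖ = 1 := by rw [ω, Complex.norm_exp]; norm_num
    simp [this]
  have h2 : ω ^ 2 * ω = 1 := by linear_combination hω3
  exact mul_right_cancel₀ hωne0 (habs.trans h2.symm)

lemma hω4 : ω ^ 4 = ω := by linear_combination ω * hω3

lemma hω22 : (ω ^ 2) ^ 2 = ω := by linear_combination ω * hω3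

lemma Lam_inv (z : ℂ) (hz : z ≠ 0) : (Lam z)⁻¹ = z⁻¹ • Matrix.diagonal ![ω ^ 2, ω, 1] := by
  apply Matrix.inv_eq_right_inv
  rw [Lam, Matrix.smul_mul, Matrix.mul_smul, Matrix.diagonal_mul_diagonal, smul_smul,
    mul_inv_cancel₀ hz, one_smul]
  ext i j
  fin_cases i <;> fin_cases j <;>
    simp [Matrix.diagonal, Matrix.one_apply] <;> linear_combination hω3

lemma mconj_explicit (a b c d e f g h i : ℂ) :
    mconj !![a,b,c;d,e,f;g,h,i]
      = !![(starRingEnd ℂ) a, (starRingEnd ℂ) b, (starRingEnd ℂ) c;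
           (starRingEnd ℂ) d, (starRingEnd ℂ) e, (starRingEnd ℂ) f;
           (starRingEnd ℂ) g, (starRingEnd ℂ) h, (starRingEnd ℂ) i] := by
  ext i' j'
  fin_cases i' <;> fin_cases j' <;> simp [mconj]

lemma gamma_conj (a b c d e f g h i : ℂ) :
    Gamma1 * !![a,b,c;d,e,f;g,h,i] * Gamma1 = !![e,d,f;b,a,c;h,g,i] := by
  ext i' j'
  fin_cases i' <;> fin_cases j' <;>
    simp [Gamma1, Matrix.mul_apply, Fin.sum_univ_succ]

lemma first_explicit (q qx : ℝ) (w : ℂ) :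
    (q : ℂ) • Lam w + Umat q qx =
      !![(q:ℂ) * w * ω, ((qx / (3 * q) : ℝ) : ℂ) * (1 - ω ^ 2), ((qx / (3 * q) : ℝ) : ℂ) * (1 - ω);
         ((qx / (3 * q) : ℝ) : ℂ) * (1 - ω), (q:ℂ) * w * ω ^ 2, ((qx / (3 * q) : ℝ) : ℂ) * (1 - ω ^ 2);
         ((qx / (3 * q) : ℝ) : ℂ) * (1 - ω ^ 2), ((qx / (3 * q) : ℝ) : ℂ) * (1 - ω), (q:ℂ) * w] := by
  ext i j
  fin_cases i <;> fin_cases j <;>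
    simp [Lam, Umat, Matrix.diagonal] <;> ring

lemma second_explicit (q qx u : ℝ) (w : ℂ) (hw : w ≠ 0) :
    (-((u : ℂ) * (q : ℂ))) • Lam w + (Lam w)⁻¹ + Vmat q qx u w =
      !![-((u:ℂ) * q) * w * ω + w⁻¹ * ω ^ 2
            + (1 / (3 * w)) * (((3 * (1 / q - 1) : ℝ) : ℂ) + ((q ^ 2 - 1 / q : ℝ) : ℂ)) * ω ^ 2,
         -(u:ℂ) * ((qx / (3 * q) : ℝ) : ℂ) * (1 - ω ^ 2) + (1 / (3 * w)) * ((q ^ 2 - 1 / q : ℝ) : ℂ) * ω,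
         -(u:ℂ) * ((qx / (3 * q) : ℝ) : ℂ) * (1 - ω) + (1 / (3 * w)) * ((q ^ 2 - 1 / q : ℝ) : ℂ);
         -(u:ℂ) * ((qx / (3 * q) : ℝ) : ℂ) * (1 - ω) + (1 / (3 * w)) * ((q ^ 2 - 1 / q : ℝ) : ℂ) * ω ^ 2,
         -((u:ℂ) * q) * w * ω ^ 2 + w⁻¹ * ω
            + (1 / (3 * w)) * (((3 * (1 / q - 1) : ℝ) : ℂ) + ((q ^ 2 - 1 / q : ℝ) : ℂ)) * ω,
         -(u:ℂ) * ((qx / (3 * q) : ℝ) : ℂ) * (1 - ω ^ 2) + (1 / (3 * w)) * ((q ^ 2 - 1 / q : ℝ) : ℂ);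
         -(u:ℂ) * ((qx / (3 * q) : ℝ) : ℂ) * (1 - ω ^ 2) + (1 / (3 * w)) * ((q ^ 2 - 1 / q : ℝ) : ℂ) * ω ^ 2,
         -(u:ℂ) * ((qx / (3 * q) : ℝ) : ℂ) * (1 - ω) + (1 / (3 * w)) * ((q ^ 2 - 1 / q : ℝ) : ℂ) * ω,
         -((u:ℂ) * q) * w + w⁻¹
            + (1 / (3 * w)) * (((3 * (1 / q - 1) : ℝ) : ℂ) + ((q ^ 2 - 1 / q : ℝ) : ℂ))] := by
  rw [Lam_inv w hw]
  ext i j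
  fin_cases i <;> fin_cases j <;>
    simp [Lam, Umat, Vmat, Matrix.diagonal, Matrix.mul_apply, Fin.sum_univ_succ,
      Matrix.one_apply, Matrix.vecHead, Matrix.vecTail] <;> ring

set_option maxHeartbeats 1000000 in
/-- **Conjugation symmetry of the Lax pair coefficients (underlying Proposition 2.6 (S1)).**
`Γ₁·conj(qΛ(conj z) + U)·Γ₁ = qΛ(z) + U` and
`Γ₁·conj(−uqΛ(conj z) + Λ(conj z)⁻¹ + V(conj z))·Γ₁ = −uqΛ(z) + Λ(z)⁻¹ + V(z)`. -/
theorem conj_symmetry (q qx u : ℝ) (hq : 0 < q) (z : ℂ) (hz : z ≠ 0) :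
    Gamma1 * mconj ((q : ℂ) • Lam ((starRingEnd ℂ) z) + Umat q qx) * Gamma1
      = (q : ℂ) • Lam z + Umat q qx ∧
    Gamma1 *
        mconj ((-((u : ℂ) * (q : ℂ))) • Lam ((starRingEnd ℂ) z) +
          (Lam ((starRingEnd ℂ) z))⁻¹ + Vmat q qx u ((starRingEnd ℂ) z)) * Gamma1
      = (-((u : ℂ) * (q : ℂ))) • Lam z + (Lam z)⁻¹ + Vmat q qx u z := by
  have hzbar : (starRingEnd ℂ) z ≠ 0 := by simpa using hz
  have h3 : (starRingEnd ℂ) (3:ℂ) = 3 := by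
    rw [show (3:ℂ) = ((3:ℝ):ℂ) by norm_num, Complex.conj_ofReal]
  constructor
  · rw [first_explicit q qx ((starRingEnd ℂ) z), mconj_explicit, gamma_conj,
      first_explicit q qx z]
    ext i j
    fin_cases i <;> fin_cases j <;>
      simp [_root_.map_mul, map_sub, map_pow, Complex.conj_conj, Complex.conj_ofReal, hstar,
        hω4, hω22, h3]
  · rw [second_explicit q qx u ((starRingEnd ℂ) z) hzbar, mconj_explicit, gamma_conj,
      second_explicit q qx u z hz]
    ext i j
    fin_cases i <;> fin_cases j <;>
    · simp only [Matrix.cons_val', Matrix.cons_val_zero, Matrix.cons_val_one, Matrix.head_cons,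
        Matrix.head_fin_const, Matrix.empty_val', Matrix.cons_val_fin_one, Matrix.cons_val_two,
        Matrix.tail_cons, Matrix.of_apply]
      simp only [_root_.map_mul, map_add, map_sub, map_neg, _root_.map_one, map_pow, map_inv₀,
        map_div₀, map_ofNat, Complex.conj_conj, Complex.conj_ofReal, hstar, h3]
      rw [hω22]

end
end
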